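/- Let Γ be a finite multicomplex on {1,…,k} such that for every i ∈ {1,…,k} there is some M ∈ Γ with M(i) ≥ 1. Then there exist a finite abstract simplicial complex Δ on some finite vertex set V and a k-linear coloring κ : V → {1,…,k} of Δ such that Γ = {S_κ : S ∈ Δ}. -/
import Mathlib


open Finset Function

variable {V : Type} [Fintype V] [DecidableEq V]

/-- A finite abstract simplicial complex on the vertex set `V`: a collection of
finite subsets of `V` closed under taking subsets, containing every singleton. -/
def IsComplex (Δ : Finset (Finset V)) : Prop :=
  (∀ S ∈ Δ, ∀ T ⊆ S, T ∈ Δ) ∧ ∀ v : V, ({v} : Finset V) ∈ Δ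

/-- `F` is a facet of `Δ`, i.e. a face maximal under inclusion. -/
def IsFacet (Δ : Finset (Finset V)) (F : Finset V) : Prop :=
  F ∈ Δ ∧ ∀ G ∈ Δ, F ⊆ G → F = G

/-- `F(v)`: the set of facets of `Δ` containing the vertex `v`. -/
def facetsOf (Δ : Finset (Finset V)) (v : V) : Set (Finset V) :=
  {F | IsFacet Δ F ∧ v ∈ F}

/-- A surjective map `κ : V → {1,…,k}` is a `k`-linear coloring of `Δ` if for every
pair of vertices with the same color the facet sets are comparable by inclusion. -/
def IsLinearColoring {k : ℕ} (Δ : Finset (Finset V)) (κ : V → Fin k) : Prop :=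
  Surjective κ ∧
  ∀ u v : V, κ u = κ v →
    facetsOf Δ u ⊆ facetsOf Δ v ∨ facetsOf Δ v ⊆ facetsOf Δ u

/-- `S_κ(i)`: the multiplicity of the color `i` in the multiset `S_κ`. -/
def mcount {k : ℕ} (κ : V → Fin k) (S : Finset V) (i : Fin k) : ℕ :=
  (S.filter fun v => κ v = i).card

/-- Every finite multicomplex on `{1,…,k}` in which every color occurs is the
associated multicomplex of some linearly colored simplicial complex. -/
theorem stmt_3 {k : ℕ} (Γ : Finset (Fin k → ℕ))
    (hclosed : ∀ M ∈ Γ, ∀ M' : Fin k → ℕ, (∀ i, M' i ≤ M i) → M' ∈ Γ)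
    (hcolors : ∀ i : Fin k, ∃ M ∈ Γ, 1 ≤ M i) :
    ∃ (n : ℕ) (Δ : Finset (Finset (Fin n))) (κ : Fin n → Fin k),
      IsComplex Δ ∧ IsLinearColoring Δ κ ∧
      ∀ M : Fin k → ℕ, M ∈ Γ ↔ ∃ S ∈ Δ, ∀ i, mcount κ S i = M i := by
  classical
  by_cases hΓ : Γ.Nonempty
  · -- main case
    set c : Fin k → ℕ := fun i => Γ.sup fun M => M i with hc
    have hc1 : ∀ i, 1 ≤ c i := by
      intro i
      obtain ⟨M, hM, hMi⟩ := hcolors i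
      exact le_trans hMi (Finset.le_sup (f := fun M => M i) hM)
    have hle : ∀ M ∈ Γ, ∀ i, M i ≤ c i := fun M hM i => Finset.le_sup (f := fun M => M i) hM
    set W := (Σ i : Fin k, Fin (c i)) with hW
    set n := Fintype.card W with hn
    set e : Fin n ≃ W := (Fintype.equivFin W).symm with he
    set κ : Fin n → Fin k := fun v => (e v).1 with hκ
    set init : (Fin k → ℕ) → Finset (Fin n) :=
      fun M => Finset.univ.filter fun v => ((e v).2 : ℕ) < M (e v).1 with hinit
    set Δ : Finset (Finset (Fin n)) :=
      Finset.univ.filter (fun S => ∃ M ∈ Γ, S ⊆ init M) with hΔ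
    have memΔ : ∀ S : Finset (Fin n), S ∈ Δ ↔ ∃ M ∈ Γ, S ⊆ init M := by
      intro S; simp [hΔ]
    -- counting lemma
    have hcount : ∀ M : Fin k → ℕ, ∀ i : Fin k, M i ≤ c i →
        mcount κ (init M) i = M i := by
      intro M i hMi
      have himg : (init M).filter (fun v => κ v = i) =
          Finset.univ.image (fun j : Fin (M i) =>
            e.symm ⟨i, ⟨(j : ℕ), lt_of_lt_of_le j.2 hMi⟩⟩) := by
        ext v
        simp only [hinit, Finset.mem_filter, Finset.mem_univ, true_and,
          Finset.mem_image]
        constructor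
        · rintro ⟨h2, h1⟩
          simp only [hκ] at h1
          rcases hw : e v with ⟨i', j'⟩
          rw [hw] at h1 h2
          simp only at h1 h2
          subst h1
          refine ⟨⟨(j' : ℕ), h2⟩, ?_⟩
          show e.symm ⟨i', j'⟩ = v
          rw [← hw]
          exact e.symm_apply_apply v
        · rintro ⟨j, rfl⟩
          constructor
          · rw [Equiv.apply_symm_apply]
            exact j.2
          · simp [hκ]
      have hinj : Function.Injective (fun j : Fin (M i) =>
          e.symm ⟨i, ⟨(j : ℕ), lt_of_lt_of_le j.2 hMi⟩⟩) := by
        intro a b hab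
        have h2 := e.symm.injective hab
        exact Fin.ext (congrArg (fun w : W => ((w.2 : ℕ))) h2)
      rw [mcount, himg, Finset.card_image_of_injective _ hinj, Finset.card_univ,
        Fintype.card_fin]
    -- membership in init is monotone in the index, for equal colors
    have hmem_init : ∀ (M : Fin k → ℕ) (u v : Fin n), (e u).1 = (e v).1 →
        ((e u).2 : ℕ) ≤ ((e v).2 : ℕ) → v ∈ init M → u ∈ init M := by
      intro M u v h1 h2 hv
      simp only [hinit, Finset.mem_filter, Finset.mem_univ, true_and] at hv ⊢
      have hM : M (e u).fst = M (e v).fst := by rw [h1]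
      rw [hM]
      exact lt_of_le_of_lt h2 hv
    -- any face containing v also contains u (same color, smaller index)
    have hface : ∀ (u v : Fin n), (e u).1 = (e v).1 →
        ((e u).2 : ℕ) ≤ ((e v).2 : ℕ) → ∀ F ∈ Δ, v ∈ F → insert u F ∈ Δ := by
      intro u v h1 h2 F hF hvF
      obtain ⟨M, hM, hFM⟩ := (memΔ F).1 hF
      refine (memΔ _).2 ⟨M, hM, ?_⟩
      intro x hx
      rcases Finset.mem_insert.1 hx with rfl | hx
      · exact hmem_init M x v h1 h2 (hFM hvF)
      · exact hFM hx
    refine ⟨n, Δ, κ, ⟨?_, ?_⟩, ⟨?_, ?_⟩, ?_⟩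
    · -- subset closed
      intro S hS T hTS
      obtain ⟨M, hM, hSM⟩ := (memΔ S).1 hS
      exact (memΔ T).2 ⟨M, hM, hTS.trans hSM⟩
    · -- singletons
      intro v
      obtain ⟨M, hM, hMv⟩ : ∃ M ∈ Γ, ((e v).2 : ℕ) < M (e v).1 := by
        have : ((e v).2 : ℕ) < c (e v).1 := (e v).2.2
        exact Finset.lt_sup_iff.1 this
      refine (memΔ _).2 ⟨M, hM, ?_⟩
      intro x hx
      rw [Finset.mem_singleton] at hx
      subst hx
      simp only [hinit, Finset.mem_filter, Finset.mem_univ, true_and]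
      exact hMv
    · -- surjectivity
      intro i
      exact ⟨e.symm ⟨i, ⟨0, hc1 i⟩⟩, by simp [hκ]⟩
    · -- linearity
      intro u v huv
      rcases le_total ((e u).2 : ℕ) ((e v).2 : ℕ) with h | h
      · right
        rintro F ⟨⟨hFΔ, hFmax⟩, hvF⟩
        have hins := hface u v huv h F hFΔ hvF
        have := hFmax _ hins (Finset.subset_insert _ _)
        refine ⟨⟨hFΔ, hFmax⟩, ?_⟩
        rw [this]
        exact Finset.mem_insert_self _ _
      · left
        rintro F ⟨⟨hFΔ, hFmax⟩, huF⟩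
        have hins := hface v u huv.symm h F hFΔ huF
        have := hFmax _ hins (Finset.subset_insert _ _)
        refine ⟨⟨hFΔ, hFmax⟩, ?_⟩
        rw [this]
        exact Finset.mem_insert_self _ _
    · -- the multicomplex correspondence
      intro M
      constructor
      · intro hM
        refine ⟨init M, (memΔ _).2 ⟨M, hM, subset_rfl⟩, fun i => hcount M i (hle M hM i)⟩
      · rintro ⟨S, hS, hSM⟩
        obtain ⟨M', hM', hSM'⟩ := (memΔ S).1 hS
        have hbound : ∀ i, M i ≤ M' i := by
          intro i
          rw [← hSM i, ← hcount M' i (hle M' hM' i)]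
          exact Finset.card_le_card (Finset.filter_subset_filter _ hSM')
        exact hclosed M' hM' M hbound
  · -- Γ empty, hence k = 0
    have hk : ∀ i : Fin k, False := by
      intro i
      obtain ⟨M, hM, _⟩ := hcolors i
      exact hΓ ⟨M, hM⟩
    refine ⟨0, ∅, fun v => v.elim0, ⟨?_, ?_⟩, ⟨?_, ?_⟩, ?_⟩
    · intro S hS; simp at hS
    · intro v; exact v.elim0
    · intro i; exact (hk i).elim
    · intro u; exact u.elim0
    · intro M
      simp only [Finset.notMem_empty, false_and, exists_false, iff_false]
      intro hM
      exact hΓ ⟨M, hM⟩
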